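/- Suppose an infinite array (d_{i,j}) of reals with d_{i,i-1} = 1 for all i satisfies, for fixed n-periodic coefficients, that each South-East diagonal η_j = (d_{i,j})_i obeys η_j = a_j^1 η_{j-1} - a_j^2 η_{j-2} + ... + (-1)^k a_j^{k+1} η_{j-k-1}, and that every (k+1)×(k+1) determinant on consecutive rows and columns equals 1. Then a_j^{k+1} = 1 for all j. -/

import Mathlib

open Matrix Finset

private lemma det_updateColumn_finset_sum {N : ℕ} {ι : Type*}
    (M : Matrix (Fin N) (Fin N) ℝ) (j : Fin N) (s : Finset ι) (f : ι → Fin N → ℝ) :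
    (M.updateCol j (fun r => ∑ i ∈ s, f i r)).det
      = ∑ i ∈ s, (M.updateCol j (f i)).det := by
  classical
  induction s using Finset.induction_on with
  | empty =>
      rw [Finset.sum_empty]
      apply Matrix.det_eq_zero_of_column_eq_zero j
      intro r
      simp
  | insert x s' hx ih =>
      rw [Finset.sum_insert hx]
      have : (fun r => ∑ i ∈ insert x s' , f i r)
          = (f x) + (fun r => ∑ i ∈ s', f i r) := by
        funext r; simp [Finset.sum_insert hx]
      rw [this, Matrix.det_updateCol_add, ih]

/-- Suppose an array `(d i j)` with `d i (i-1) = 1` has South-East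
diagonals satisfying `η_j = a_j^1 η_{j-1} - a_j^2 η_{j-2} + ⋯ + (-1)^k a_j^{k+1} η_{j-k-1}`
for `n`-periodic coefficients, and every `(k+1)×(k+1)` determinant on consecutive
rows and columns equals `1`. Then `a_j^{k+1} = 1` for all `j`. -/
theorem stmt19 (k n : ℕ) (a : ℤ → ℕ → ℝ) (d : ℤ → ℤ → ℝ)
    (hper : ∀ (j : ℤ) (m : ℕ), a (j + (n : ℤ)) m = a j m)
    (hone : ∀ i : ℤ, d i (i - 1) = 1)
    (hrec : ∀ i j : ℤ, d i j =
      ∑ m ∈ Finset.Icc 1 (k + 1), (-1 : ℝ) ^ (m - 1) * a j m * d i (j - (m : ℤ)))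
    (hdet : ∀ i j : ℤ,
      (Matrix.of fun r c : Fin (k + 1) =>
        d (i + (r.val : ℤ)) (j + (c.val : ℤ))).det = 1) :
    ∀ j : ℤ, a j (k + 1) = 1 := by
  intro j
  set M : Matrix (Fin (k+1)) (Fin (k+1)) ℝ :=
    Matrix.of fun r c : Fin (k+1) => d (0 + (r.val : ℤ)) (j - (k : ℤ) + (c.val : ℤ)) with hMdef
  have hM : M.det = 1 := hdet 0 (j - k)
  -- the last column of M is η_j
  have hcol : (fun r : Fin (k+1) => M r (Fin.last k)) = fun r => d (0 + (r.val : ℤ)) j := by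
    funext r
    simp only [hMdef, Matrix.of_apply, Fin.val_last]
    ring_nf
  have h1 : (M.updateCol (Fin.last k) (fun r => d (0 + (r.val : ℤ)) j)).det = 1 := by
    rw [← hcol, Matrix.updateCol_eq_self, hM]
  -- expand the last column via the recurrence
  have h2 : (M.updateCol (Fin.last k)
      (fun r => ∑ m ∈ Finset.Icc 1 (k + 1),
        (-1 : ℝ) ^ (m - 1) * a j m * d (0 + (r.val : ℤ)) (j - (m : ℤ)))).det = 1 := by
    have : (fun r : Fin (k+1) => d (0 + (r.val : ℤ)) j)
        = fun r => ∑ m ∈ Finset.Icc 1 (k + 1),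
            (-1 : ℝ) ^ (m - 1) * a j m * d (0 + (r.val : ℤ)) (j - (m : ℤ)) := by
      funext r; exact hrec _ j
    rwa [← this]
  rw [det_updateColumn_finset_sum] at h2
  -- terms for 1 ≤ m ≤ k vanish
  have hzero : ∀ m ∈ Finset.Icc 1 k,
      (M.updateCol (Fin.last k)
        (fun r => (-1 : ℝ) ^ (m - 1) * a j m * d (0 + (r.val : ℤ)) (j - (m : ℤ)))).det = 0 := by
    intro m hm
    obtain ⟨hm1, hmk⟩ := Finset.mem_Icc.mp hm
    have hsmul : (fun r : Fin (k+1) =>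
        (-1 : ℝ) ^ (m - 1) * a j m * d (0 + (r.val : ℤ)) (j - (m : ℤ)))
        = ((-1 : ℝ) ^ (m - 1) * a j m) • (fun r : Fin (k+1) => d (0 + (r.val : ℤ)) (j - (m : ℤ))) := by
      funext r; simp [mul_assoc]
    rw [hsmul, Matrix.det_updateCol_smul]
    have hi : (⟨k - m, by omega⟩ : Fin (k+1)) ≠ Fin.last k := by
      intro h
      have := congrArg Fin.val h
      simp [Fin.val_last] at this
      omega
    have hz : (M.updateCol (Fin.last k)
        (fun r => d (0 + (r.val : ℤ)) (j - (m : ℤ)))).det = 0 := by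
      apply Matrix.det_zero_of_column_eq hi
      intro r
      have e1 : (M.updateCol (Fin.last k)
          (fun r => d (0 + (r.val : ℤ)) (j - (m : ℤ)))) r ⟨k - m, by omega⟩
          = d (0 + (r.val : ℤ)) (j - (m : ℤ)) := by
        rw [Matrix.updateCol_apply, if_neg hi]
        show d (0 + (r.val : ℤ)) (j - (k : ℤ) + ((k - m : ℕ) : ℤ)) = _
        congr 1
        omega
      have e2 : (M.updateCol (Fin.last k)
          (fun r => d (0 + (r.val : ℤ)) (j - (m : ℤ)))) r (Fin.last k)
          = d (0 + (r.val : ℤ)) (j - (m : ℤ)) := by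
        rw [Matrix.updateCol_apply, if_pos rfl]
      rw [e1, e2]
    rw [hz, mul_zero]
  -- the term m = k+1
  set M' : Matrix (Fin (k+1)) (Fin (k+1)) ℝ :=
    Matrix.of fun r c : Fin (k+1) => d (0 + (r.val : ℤ)) (j - ((k : ℤ) + 1) + (c.val : ℤ)) with hM'def
  have hM' : M'.det = 1 := hdet 0 (j - ((k : ℤ) + 1))
  have hperm : M.updateCol (Fin.last k) (fun r => d (0 + (r.val : ℤ)) (j - ((k : ℕ) + 1 : ℕ)))
      = M'.submatrix id (finRotate (k+1)) := by
    funext r c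
    by_cases hc : c = Fin.last k
    · subst hc
      simp only [Matrix.updateCol_apply, if_pos rfl, Matrix.submatrix_apply, id_eq,
        finRotate_last, hM'def, Matrix.of_apply]
      norm_num
    · simp only [Matrix.updateCol_apply, if_neg hc, Matrix.submatrix_apply, id_eq,
        hMdef, hM'def, Matrix.of_apply]
      rw [coe_finRotate_of_ne_last hc]
      congr 1
      push_cast
      ring
  have hlast : (M.updateCol (Fin.last k)
      (fun r => (-1 : ℝ) ^ ((k+1) - 1) * a j (k+1) * d (0 + (r.val : ℤ)) (j - ((k : ℕ) + 1 : ℕ)))).det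
      = (-1 : ℝ) ^ k * a j (k+1) * ((-1 : ℝ) ^ k) := by
    have hsmul : (fun r : Fin (k+1) =>
        (-1 : ℝ) ^ ((k+1) - 1) * a j (k+1) * d (0 + (r.val : ℤ)) (j - ((k : ℕ) + 1 : ℕ)))
        = ((-1 : ℝ) ^ k * a j (k+1)) • (fun r : Fin (k+1) => d (0 + (r.val : ℤ)) (j - ((k : ℕ) + 1 : ℕ))) := by
      funext r; simp [mul_assoc]
    rw [hsmul, Matrix.det_updateCol_smul, hperm, Matrix.det_permute', sign_finRotate, hM']
    simp
  -- put it together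
  rw [Finset.sum_Icc_succ_top (by omega : 1 ≤ k + 1)] at h2
  rw [Finset.sum_congr rfl hzero, Finset.sum_const, smul_zero, zero_add] at h2
  have hkk : ((k + 1 : ℕ) : ℤ) = (k : ℤ) + 1 := by push_cast; ring
  rw [hlast] at h2
  have hsq : (-1 : ℝ) ^ k * ((-1 : ℝ) ^ k) = 1 := by
    rw [← pow_add, ← two_mul, pow_mul]; norm_num
  nlinarith [h2, hsq]
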